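/- Let h : 𝒯 → 𝒜 be a homology theory that reflects isomorphisms and is full. Then the ideal 𝕀(X,Y) = { f ∈ Hom_𝒯(X,Y) | h(f) = 0 } is a square-zero ideal: for any morphisms f : X → Y and g : Y → Z in 𝒯 with h(f) = 0 and h(g) = 0, the composite g ∘ f = 0. -/

import Mathlib

open CategoryTheory Category Limits Pretriangulated

/-- If a homology theory `h : 𝒯 ⥤ 𝒜` on a pretriangulated category
reflects isomorphisms and is full, then the ideal of morphisms killed by `h` squares
to zero: `h(f) = 0` and `h(g) = 0` imply `f ≫ g = 0`. -/
theorem square_zero_ideal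
    {T : Type*} [Category T] [HasZeroObject T] [Preadditive T] [HasShift T ℤ]
    [∀ n : ℤ, (shiftFunctor T n).Additive] [Pretriangulated T]
    {A : Type*} [Category A] [Abelian A] [HasShift A ℤ]
    [∀ n : ℤ, (shiftFunctor A n).Additive]
    (h : T ⥤ A) [h.Additive] [h.CommShift ℤ] [h.IsHomological]
    [h.ReflectsIsomorphisms] [h.Full]
    {X Y Z : T} (f : X ⟶ Y) (g : Y ⟶ Z)
    (hf : h.map f = 0) (hg : h.map g = 0) :
    f ≫ g = 0 := by
  obtain ⟨C, p, q, hT₁⟩ := Pretriangulated.distinguished_cocone_triangle f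
  have hfp : f ≫ p = 0 := comp_distTriang_mor_zero₁₂ _ hT₁
  -- h.map p is mono
  have exact₁ := h.map_distinguished_exact _ hT₁
  have monop : Mono (h.map p) := exact₁.mono_g hf
  -- the map m = (p, g) : Y ⟶ C ⊞ Z
  let m : Y ⟶ C ⊞ Z := biprod.lift p g
  obtain ⟨E, n, e, hT₂⟩ := Pretriangulated.distinguished_cocone_triangle m
  have hmn : m ≫ n = 0 := comp_distTriang_mor_zero₁₂ _ hT₂
  have monom : Mono (h.map m) := by
    have : h.map m ≫ h.map biprod.fst = h.map p := by
      rw [← h.map_comp]; simp [m]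
    exact mono_of_mono_fac this
  -- h.map e = 0
  have he : h.map e = 0 := by
    have hcomp : e ≫ m⟦(1:ℤ)⟧' = 0 := comp_distTriang_mor_zero₃₁ _ hT₂
    have nat := h.commShiftIso_hom_naturality m (1 : ℤ)
    have monoshift : Mono (h.map (m⟦(1:ℤ)⟧')) := by
      have : Mono (h.map (m⟦(1:ℤ)⟧') ≫ (h.commShiftIso (1:ℤ)).hom.app (C ⊞ Z)) := by
        rw [nat]; infer_instance
      exact mono_of_mono _ ((h.commShiftIso (1:ℤ)).hom.app (C ⊞ Z))
    have : h.map e ≫ h.map (m⟦(1:ℤ)⟧') = 0 := by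
      rw [← h.map_comp, hcomp, h.map_zero]
    exact (cancel_mono (h.map (m⟦(1:ℤ)⟧'))).mp (by rw [this, zero_comp])
  -- h.map n is epi
  have exact₂ := h.map_distinguished_exact _ (rot_of_distTriang _ hT₂)
  have epin : Epi (h.map n) := exact₂.epi_f he
  -- exactness at h(C ⊞ Z)
  have exact₃ := h.map_distinguished_exact _ hT₂
  have epig : Epi ((shortComplexOfDistTriangle (Triangle.mk m n e) hT₂).map h).g := epin
  -- descend h.map biprod.snd through h.map n
  have hk : ((shortComplexOfDistTriangle (Triangle.mk m n e) hT₂).map h).f ≫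
      h.map (biprod.snd : C ⊞ Z ⟶ Z) = 0 := by
    show h.map m ≫ h.map (biprod.snd : C ⊞ Z ⟶ Z) = 0
    rw [← h.map_comp]; simp [m, hg]
  obtain ⟨ρ, hρ⟩ : ∃ ρ : E ⟶ Z, h.map ρ = exact₃.desc (h.map (biprod.snd : C ⊞ Z ⟶ Z)) hk :=
    h.map_surjective (exact₃.desc (h.map (biprod.snd : C ⊞ Z ⟶ Z)) hk)
  have hnρ : h.map n ≫ h.map ρ = h.map (biprod.snd : C ⊞ Z ⟶ Z) := by
    rw [hρ]; exact exact₃.g_desc _ hk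
  -- ε is an iso
  have hε : h.map ((biprod.inr : Z ⟶ C ⊞ Z) ≫ n ≫ ρ) = 𝟙 (h.obj Z) := by
    rw [h.map_comp, h.map_comp, hnρ, ← h.map_comp]
    simp
  have : IsIso (h.map ((biprod.inr : Z ⟶ C ⊞ Z) ≫ n ≫ ρ)) := by rw [hε]; infer_instance
  have isoε : IsIso ((biprod.inr : Z ⟶ C ⊞ Z) ≫ n ≫ ρ) := isIso_of_reflects_iso _ h
  -- conclude
  have hfm : f ≫ m = (f ≫ g) ≫ biprod.inr := by
    apply biprod.hom_ext <;> simp [m, hfp]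
  have h1 : f ≫ m ≫ n = 0 := by rw [hmn, comp_zero]
  have key : (f ≫ g) ≫ ((biprod.inr : Z ⟶ C ⊞ Z) ≫ n ≫ ρ) = 0 := by
    calc (f ≫ g) ≫ biprod.inr ≫ n ≫ ρ = (f ≫ m) ≫ n ≫ ρ := by
            rw [hfm]; simp only [assoc]
      _ = (f ≫ m ≫ n) ≫ ρ := by simp only [assoc]
      _ = 0 := by rw [h1, zero_comp]
  simpa using key =≫ inv ((biprod.inr : Z ⟶ C ⊞ Z) ≫ n ≫ ρ)
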